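/- arXiv:2603.19824 — 2 statements merged into one kernel-verified Lean document; each statement's English description precedes it below -/
import Mathlib

section
/- Fix $r>1$ and $c>0$. The function $\mathbb{V}_1(\alpha)=\int_0^1 \frac{dt}{\sqrt{(1-t^2)+\frac{\alpha^{2r-2}}{r\,c}(1-t^{2r})}}$ is continuous and strictly decreasing on $(0,\infty)$, with $\mathbb{V}_1(\alpha)\to\pi/2$ as $\alpha\to 0^+$ and $\mathbb{V}_1(\alpha)\to 0$ as $\alpha\to\infty$. Consequently $\mathbb{V}_1$ is a bijection from $(0,\infty)$ onto $(0,\pi/2)$. -/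
open Real

noncomputable def V1 (r c α : ℝ) : ℝ :=
  ∫ t in (0:ℝ)..1,
    1 / Real.sqrt ((1 - t ^ 2) + α ^ (2 * r - 2) / (r * c) * (1 - t ^ (2 * r)))

namespace Stmt7Aux

open MeasureTheory intervalIntegral Filter Set

noncomputable def G (r k : ℝ) (t : ℝ) : ℝ :=
  1 / Real.sqrt ((1 - t ^ 2) + k * (1 - t ^ (2 * r)))

noncomputable def F (r k : ℝ) : ℝ := ∫ t in (0:ℝ)..1, G r k t

lemma V1_eq (r c α : ℝ) : V1 r c α = F r (α ^ (2 * r - 2) / (r * c)) := rfl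

lemma V1_nonneg (r c α : ℝ) : 0 ≤ V1 r c α := by
  apply intervalIntegral.integral_nonneg zero_le_one
  intro u hu
  positivity

variable {r c k k₁ k₂ t : ℝ}


lemma base_integrable :
    IntervalIntegrable (fun t : ℝ => 1 / Real.sqrt (1 - t ^ 2)) volume 0 1 := by
  have h1 : IntervalIntegrable (fun x : ℝ => x ^ (-(1/2) : ℝ)) volume 0 1 :=
    intervalIntegral.intervalIntegrable_rpow' (by norm_num)
  have h2 : IntervalIntegrable (fun x : ℝ => (1 - x) ^ (-(1/2) : ℝ)) volume 0 1 := by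
    simpa using (h1.comp_sub_left 1).symm
  refine h2.mono_fun ?_ ?_
  · apply Measurable.aestronglyMeasurable
    simp only [one_div]
    exact ((Real.continuous_sqrt.comp (continuous_const.sub (continuous_pow 2))).measurable).inv
  · filter_upwards [MeasureTheory.ae_restrict_mem measurableSet_uIoc] with t ht
    rw [Set.uIoc_of_le zero_le_one] at ht
    have ht0 : 0 ≤ t := ht.1.le
    have ht1 : t ≤ 1 := ht.2
    have h1t : (0:ℝ) ≤ 1 - t := by linarith
    have key : 1 / Real.sqrt (1 - t ^ 2) ≤ (1 - t) ^ (-(1/2) : ℝ) := by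
      rw [Real.rpow_neg h1t, ← Real.sqrt_eq_rpow, ← one_div]
      rcases eq_or_lt_of_le ht1 with rfl | htlt
      · norm_num
      · apply one_div_le_one_div_of_le (Real.sqrt_pos.2 (by linarith))
        apply Real.sqrt_le_sqrt; nlinarith
    have hn : 0 ≤ (1 - t) ^ (-(1/2) : ℝ) := Real.rpow_nonneg h1t _
    rw [Real.norm_eq_abs, Real.norm_eq_abs, abs_of_nonneg (by positivity), abs_of_nonneg hn]
    exact key

lemma base_value : ∫ t in (0:ℝ)..1, 1 / Real.sqrt (1 - t ^ 2) = π / 2 := by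
  have := intervalIntegral.integral_eq_sub_of_hasDeriv_right_of_le zero_le_one
    (Real.continuous_arcsin.continuousOn)
    (fun x hx => ((Real.hasDerivAt_arcsin (by linarith [hx.1]) (ne_of_lt hx.2)).hasDerivWithinAt))
    base_integrable
  rw [this, Real.arcsin_one, Real.arcsin_zero, sub_zero]


lemma rpow_le_sq (hr : 1 < r) (ht0 : 0 ≤ t) (ht1 : t ≤ 1) : t ^ (2 * r) ≤ t ^ 2 := by
  rcases eq_or_lt_of_le ht0 with rfl | ht0'
  · rw [Real.zero_rpow (by positivity)]; positivity
  · have h2 : t ^ (2:ℝ) = t ^ 2 := by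
      rw [show ((2:ℝ)) = ((2:ℕ):ℝ) by norm_num, Real.rpow_natCast]
    calc t ^ (2 * r) ≤ t ^ (2:ℝ) :=
          Real.rpow_le_rpow_of_exponent_ge ht0' ht1 (by nlinarith)
      _ = t ^ 2 := h2

lemma one_sub_rpow_le (hr : 1 < r) (ht0 : 0 ≤ t) (ht1 : t ≤ 1) :
    1 - t ^ (2 * r) ≤ r * (1 - t ^ 2) := by
  have hb := one_add_mul_self_le_rpow_one_add (s := t ^ 2 - 1) (by nlinarith) (p := r) hr.le
  have he : (1 + (t ^ 2 - 1)) ^ (r:ℝ) = t ^ (2 * r) := by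
    have : (1:ℝ) + (t ^ 2 - 1) = t ^ (2:ℝ) := by
      rw [show ((2:ℝ)) = ((2:ℕ):ℝ) by norm_num, Real.rpow_natCast]; ring
    rw [this, ← Real.rpow_mul ht0]
  rw [he] at hb; nlinarith

lemma rpow_le_one' (ht0 : 0 ≤ t) (ht1 : t ≤ 1) (hr : 1 < r) : t ^ (2 * r) ≤ 1 :=
  Real.rpow_le_one ht0 ht1 (by nlinarith)

lemma D_lower (hr : 1 < r) (hk : 0 ≤ k) (ht0 : 0 ≤ t) (ht1 : t ≤ 1) :
    (1 + k) * (1 - t ^ 2) ≤ (1 - t ^ 2) + k * (1 - t ^ (2 * r)) := by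
  nlinarith [rpow_le_sq hr ht0 ht1]

lemma D_upper (hr : 1 < r) (hk : 0 ≤ k) (ht0 : 0 ≤ t) (ht1 : t ≤ 1) :
    (1 - t ^ 2) + k * (1 - t ^ (2 * r)) ≤ (1 + r * k) * (1 - t ^ 2) := by
  nlinarith [one_sub_rpow_le hr ht0 ht1]

lemma G_at_one (hr : 1 < r) : G r k 1 = 0 := by
  simp [G, Real.one_rpow]

lemma G_le (hr : 1 < r) (hk : 0 ≤ k) (ht0 : 0 ≤ t) (ht1 : t ≤ 1) :
    G r k t ≤ (1 / Real.sqrt (1 + k)) * (1 / Real.sqrt (1 - t ^ 2)) := by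
  rcases eq_or_lt_of_le ht1 with rfl | ht
  · rw [G_at_one hr]; norm_num
  · have h2 : (0:ℝ) < 1 - t ^ 2 := by nlinarith
    calc G r k t ≤ 1 / Real.sqrt ((1 + k) * (1 - t ^ 2)) := by
          apply one_div_le_one_div_of_le (Real.sqrt_pos.2 (by positivity))
          exact Real.sqrt_le_sqrt (D_lower hr hk ht0 ht1)
      _ = (1 / Real.sqrt (1 + k)) * (1 / Real.sqrt (1 - t ^ 2)) := by
          rw [Real.sqrt_mul (by positivity), one_div_mul_one_div]

lemma G_ge (hr : 1 < r) (hk : 0 ≤ k) (ht0 : 0 ≤ t) (ht1 : t ≤ 1) :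
    (1 / Real.sqrt (1 + r * k)) * (1 / Real.sqrt (1 - t ^ 2)) ≤ G r k t := by
  rcases eq_or_lt_of_le ht1 with rfl | ht
  · rw [G_at_one hr]; norm_num
  · have h2 : (0:ℝ) < 1 - t ^ 2 := by nlinarith
    have hD : (0:ℝ) < (1 - t ^ 2) + k * (1 - t ^ (2 * r)) :=
      lt_of_lt_of_le (by positivity) (D_lower hr hk ht0 ht1)
    calc (1 / Real.sqrt (1 + r * k)) * (1 / Real.sqrt (1 - t ^ 2))
        = 1 / Real.sqrt ((1 + r * k) * (1 - t ^ 2)) := by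
          rw [Real.sqrt_mul (by nlinarith), one_div_mul_one_div]
      _ ≤ G r k t := by
          apply one_div_le_one_div_of_le (Real.sqrt_pos.2 hD)
          exact Real.sqrt_le_sqrt (D_upper hr hk ht0 ht1)

lemma G_anti (hr : 1 < r) (hk₁ : 0 ≤ k₁) (hk : k₁ ≤ k₂) (ht0 : 0 ≤ t) (ht1 : t ≤ 1) :
    G r k₂ t ≤ G r k₁ t := by
  rcases eq_or_lt_of_le ht1 with rfl | ht
  · rw [G_at_one hr, G_at_one hr]
  · have h2 : (0:ℝ) < 1 - t ^ 2 := by nlinarith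
    have hD : (0:ℝ) < (1 - t ^ 2) + k₁ * (1 - t ^ (2 * r)) :=
      lt_of_lt_of_le (by positivity) (D_lower hr hk₁ ht0 ht1)
    apply one_div_le_one_div_of_le (Real.sqrt_pos.2 hD)
    apply Real.sqrt_le_sqrt
    nlinarith [rpow_le_one' ht0 ht1 hr]

lemma G_strict_anti (hr : 1 < r) (hk₁ : 0 ≤ k₁) (hk : k₁ < k₂) (ht0 : 0 ≤ t) (ht1 : t < 1) :
    G r k₂ t < G r k₁ t := by
  have h2 : (0:ℝ) < 1 - t ^ 2 := by nlinarith
  have hD : (0:ℝ) < (1 - t ^ 2) + k₁ * (1 - t ^ (2 * r)) :=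
    lt_of_lt_of_le (by nlinarith) (D_lower hr hk₁ ht0 ht1.le)
  apply one_div_lt_one_div_of_lt (Real.sqrt_pos.2 hD)
  apply Real.sqrt_lt_sqrt hD.le
  have hlt : t ^ (2 * r) < 1 := Real.rpow_lt_one ht0 ht1 (by nlinarith)
  nlinarith

lemma G_diff_le (hr : 1 < r) (hk₁ : 0 ≤ k₁) (hk : k₁ ≤ k₂) (ht0 : 0 ≤ t) (ht1 : t ≤ 1) :
    G r k₁ t - G r k₂ t ≤ (r / 2 * (k₂ - k₁)) * (1 / Real.sqrt (1 - t ^ 2)) := by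
  rcases eq_or_lt_of_le ht1 with rfl | ht
  · rw [G_at_one hr, G_at_one hr]; norm_num
  · have h2 : (0:ℝ) < 1 - t ^ 2 := by nlinarith
    set s := Real.sqrt (1 - t ^ 2) with hs_def
    have hs : 0 < s := Real.sqrt_pos.2 h2
    have hs2 : s ^ 2 = 1 - t ^ 2 := Real.sq_sqrt h2.le
    have hD1 : (0:ℝ) < (1 - t ^ 2) + k₁ * (1 - t ^ (2 * r)) :=
      lt_of_lt_of_le (by positivity) (D_lower hr hk₁ ht0 ht1)
    have hD2 : (0:ℝ) < (1 - t ^ 2) + k₂ * (1 - t ^ (2 * r)) :=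
      lt_of_lt_of_le (by nlinarith) (D_lower hr (hk₁.trans hk) ht0 ht1)
    set a := Real.sqrt ((1 - t ^ 2) + k₁ * (1 - t ^ (2 * r))) with ha_def
    set b := Real.sqrt ((1 - t ^ 2) + k₂ * (1 - t ^ (2 * r))) with hb_def
    have ha : 0 < a := Real.sqrt_pos.2 hD1
    have hb : 0 < b := Real.sqrt_pos.2 hD2
    have ha2 : a ^ 2 = (1 - t ^ 2) + k₁ * (1 - t ^ (2 * r)) := Real.sq_sqrt hD1.le
    have hb2 : b ^ 2 = (1 - t ^ 2) + k₂ * (1 - t ^ (2 * r)) := Real.sq_sqrt hD2.le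
    have hsa : s ≤ a := by
      rw [hs_def, ha_def]; apply Real.sqrt_le_sqrt; nlinarith [rpow_le_one' ht0 ht1 hr]
    have hsb : s ≤ b := by
      rw [hs_def, hb_def]; apply Real.sqrt_le_sqrt
      nlinarith [rpow_le_one' ht0 ht1 hr]
    have hab : a ≤ b := by
      rw [ha_def, hb_def]; apply Real.sqrt_le_sqrt
      nlinarith [rpow_le_one' ht0 ht1 hr]
    have hdiff : b ^ 2 - a ^ 2 ≤ (k₂ - k₁) * (r * (1 - t ^ 2)) := by
      rw [ha2, hb2]
      have := one_sub_rpow_le hr ht0 ht1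
      nlinarith
    show 1 / a - 1 / b ≤ r / 2 * (k₂ - k₁) * (1 / s)
    rw [div_sub_div _ _ ha.ne' hb.ne', one_mul, mul_one, mul_one_div,
      div_le_div_iff₀ (by positivity) hs]
    -- (b - a) * s ≤ r / 2 * (k₂ - k₁) * (a * b)
    have key1 : (b - a) * (2 * s) ≤ (b - a) * (a + b) := by
      apply mul_le_mul_of_nonneg_left (by linarith) (by linarith)
    have key2 : (b - a) * (a + b) = b ^ 2 - a ^ 2 := by ring
    have key3 : s ^ 2 ≤ a * b := by nlinarith
    nlinarith [key1, key2, hdiff, hs2,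
      mul_le_mul_of_nonneg_left key3 (mul_nonneg (sub_nonneg.2 hk) (by linarith : (0:ℝ) ≤ r))]


lemma G_nonneg : 0 ≤ G r k t := by unfold G; positivity

lemma sqrt_one_add_pos (hr : 1 < r) (hk : 0 ≤ k) : (0:ℝ) < 1 + k := by linarith

lemma G_integrable (hr : 1 < r) (hk : 0 ≤ k) :
    IntervalIntegrable (G r k) volume 0 1 := by
  refine base_integrable.mono_fun ?_ ?_
  · apply Measurable.aestronglyMeasurable
    unfold G
    simp only [one_div]
    apply Measurable.inv
    fun_prop
  · filter_upwards [MeasureTheory.ae_restrict_mem measurableSet_uIoc] with t ht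
    rw [Set.uIoc_of_le zero_le_one] at ht
    have h1 : G r k t ≤ (1 / Real.sqrt (1 + k)) * (1 / Real.sqrt (1 - t ^ 2)) :=
      G_le hr hk ht.1.le ht.2
    have h2 : (1:ℝ) / Real.sqrt (1 + k) ≤ 1 := by
      rw [div_le_one (Real.sqrt_pos.2 (by linarith))]
      exact Real.one_le_sqrt.2 (by linarith)
    have h3 : (0:ℝ) ≤ 1 / Real.sqrt (1 - t ^ 2) := by positivity
    rw [Real.norm_eq_abs, Real.norm_eq_abs, abs_of_nonneg G_nonneg, abs_of_nonneg h3]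
    nlinarith
lemma comp_integrable (hr : 1 < r) (a : ℝ) :
    IntervalIntegrable (fun t : ℝ => a * (1 / Real.sqrt (1 - t ^ 2))) volume 0 1 :=
  base_integrable.const_mul a

lemma F_le (hr : 1 < r) (hk : 0 ≤ k) : F r k ≤ (1 / Real.sqrt (1 + k)) * (π / 2) := by
  rw [show (1 / Real.sqrt (1 + k)) * (π / 2) =
      ∫ t in (0:ℝ)..1, (1 / Real.sqrt (1 + k)) * (1 / Real.sqrt (1 - t ^ 2)) by
    rw [intervalIntegral.integral_const_mul, base_value]]
  exact intervalIntegral.integral_mono_on zero_le_one (G_integrable hr hk)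
    (comp_integrable hr _) (fun x hx => G_le hr hk hx.1 hx.2)

lemma F_ge (hr : 1 < r) (hk : 0 ≤ k) : (1 / Real.sqrt (1 + r * k)) * (π / 2) ≤ F r k := by
  rw [show (1 / Real.sqrt (1 + r * k)) * (π / 2) =
      ∫ t in (0:ℝ)..1, (1 / Real.sqrt (1 + r * k)) * (1 / Real.sqrt (1 - t ^ 2)) by
    rw [intervalIntegral.integral_const_mul, base_value]]
  exact intervalIntegral.integral_mono_on zero_le_one (comp_integrable hr _)
    (G_integrable hr hk) (fun x hx => G_ge hr hk hx.1 hx.2)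

lemma F_pos (hr : 1 < r) (hk : 0 ≤ k) : 0 < F r k := by
  refine lt_of_lt_of_le ?_ (F_ge hr hk)
  have h1 : (0:ℝ) < 1 + r * k := by nlinarith
  have h2 : (0:ℝ) < Real.sqrt (1 + r * k) := Real.sqrt_pos.2 h1
  positivity

lemma F_anti (hr : 1 < r) (hk₁ : 0 ≤ k₁) (hk : k₁ ≤ k₂) : F r k₂ ≤ F r k₁ :=
  intervalIntegral.integral_mono_on zero_le_one (G_integrable hr (hk₁.trans hk))
    (G_integrable hr hk₁) (fun x hx => G_anti hr hk₁ hk hx.1 hx.2)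

lemma F_strict_anti (hr : 1 < r) (hk₁ : 0 ≤ k₁) (hk : k₁ < k₂) : F r k₂ < F r k₁ := by
  rw [← sub_pos]
  have hi₁ := G_integrable hr hk₁ (r := r)
  have hi₂ := G_integrable hr (hk₁.trans hk.le) (r := r) (k := k₂)
  rw [show F r k₁ - F r k₂ = ∫ t in (0:ℝ)..1, (G r k₁ t - G r k₂ t) from
    (intervalIntegral.integral_sub hi₁ hi₂).symm]
  refine (intervalIntegral.integral_pos_iff_support_of_nonneg_ae' ?_ (hi₁.sub hi₂)).2
    ⟨zero_lt_one, ?_⟩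
  · filter_upwards [MeasureTheory.ae_restrict_mem measurableSet_uIoc] with t ht
    rw [Set.uIoc_of_le zero_le_one] at ht
    exact sub_nonneg.2 (G_anti hr hk₁ hk.le ht.1.le ht.2)
  · have hsub : Set.Ioo (0:ℝ) 1 ⊆
        Function.support (fun t => G r k₁ t - G r k₂ t) ∩ Set.Ioc 0 1 := by
      intro x hx
      refine ⟨?_, hx.1, hx.2.le⟩
      simp only [Function.mem_support]
      exact ne_of_gt (sub_pos.2 (G_strict_anti hr hk₁ hk hx.1.le hx.2))
    calc (0:ENNReal) < volume (Set.Ioo (0:ℝ) 1) := by simp [Real.volume_Ioo]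
      _ ≤ _ := measure_mono hsub

lemma F_lip (hr : 1 < r) (hk₁ : 0 ≤ k₁) (hk : k₁ ≤ k₂) :
    F r k₁ - F r k₂ ≤ (r / 2 * (k₂ - k₁)) * (π / 2) := by
  have hi₁ := G_integrable hr hk₁ (r := r)
  have hi₂ := G_integrable hr (hk₁.trans hk) (r := r) (k := k₂)
  rw [show F r k₁ - F r k₂ = ∫ t in (0:ℝ)..1, (G r k₁ t - G r k₂ t) from
    (intervalIntegral.integral_sub hi₁ hi₂).symm]
  rw [show (r / 2 * (k₂ - k₁)) * (π / 2) =
      ∫ t in (0:ℝ)..1, (r / 2 * (k₂ - k₁)) * (1 / Real.sqrt (1 - t ^ 2)) by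
    rw [intervalIntegral.integral_const_mul, base_value]]
  exact intervalIntegral.integral_mono_on zero_le_one (hi₁.sub hi₂)
    (comp_integrable hr _) (fun x hx => G_diff_le hr hk₁ hk hx.1 hx.2)

lemma F_continuousOn (hr : 1 < r) : ContinuousOn (F r) (Set.Ici 0) := by
  have hK : (0:ℝ) ≤ r / 2 * (π / 2) := by positivity
  refine (LipschitzOnWith.of_dist_le_mul (K := ⟨r / 2 * (π / 2), hK⟩) ?_).continuousOn
  intro x hx y hy
  simp only [NNReal.coe_mk, Real.dist_eq]
  rcases le_total x y with h | h
  · rw [abs_of_nonneg (sub_nonneg.2 (F_anti hr hx h)), abs_of_nonpos (by linarith)]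
    have := F_lip hr hx h
    change F r x - F r y ≤ r / 2 * (π / 2) * -(x - y)
    nlinarith
  · rw [abs_of_nonpos (sub_nonpos.2 (F_anti hr hy h)), abs_of_nonneg (by linarith)]
    have := F_lip hr hy h
    change -(F r x - F r y) ≤ r / 2 * (π / 2) * (x - y)
    nlinarith

end Stmt7Aux

open Stmt7Aux Filter MeasureTheory intervalIntegral

theorem stmt_7 (r c : ℝ) (hr : 1 < r) (hc : 0 < c) :
    ContinuousOn (V1 r c) (Set.Ioi 0) ∧
    StrictAntiOn (V1 r c) (Set.Ioi 0) ∧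
    Filter.Tendsto (V1 r c) (nhdsWithin 0 (Set.Ioi 0)) (nhds (π / 2)) ∧
    Filter.Tendsto (V1 r c) Filter.atTop (nhds 0) ∧
    Set.BijOn (V1 r c) (Set.Ioi 0) (Set.Ioo 0 (π / 2)) := by
  have hrc : (0:ℝ) < r * c := by positivity
  have hre : (0:ℝ) < 2 * r - 2 := by linarith
  set kf : ℝ → ℝ := fun α => α ^ (2 * r - 2) / (r * c) with hkf_def
  have hV : ∀ α, V1 r c α = F r (kf α) := fun α => V1_eq r c α
  have hkf_pos : ∀ α : ℝ, 0 < α → 0 < kf α := fun α hα =>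
    div_pos (Real.rpow_pos_of_pos hα _) hrc
  have hkf_cont : ContinuousOn kf (Set.Ioi 0) := by
    apply ContinuousOn.div_const
    intro α hα
    exact (Real.continuousAt_rpow_const α _ (Or.inl (ne_of_gt hα))).continuousWithinAt
  have hkf_mono : ∀ a ∈ Set.Ioi (0:ℝ), ∀ b ∈ Set.Ioi (0:ℝ), a < b → kf a < kf b := by
    intro a ha b hb hab
    have := Real.rpow_lt_rpow (le_of_lt ha) hab hre
    exact div_lt_div_of_pos_right this hrc
  -- continuity
  have hcont : ContinuousOn (V1 r c) (Set.Ioi 0) := by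
    have : V1 r c = F r ∘ kf := funext hV
    rw [this]
    exact (F_continuousOn hr).comp hkf_cont
      (fun α hα => (hkf_pos α hα).le)
  have hanti : StrictAntiOn (V1 r c) (Set.Ioi 0) := by
    intro a ha b hb hab
    rw [hV a, hV b]
    exact F_strict_anti hr (hkf_pos a ha).le (hkf_mono a ha b hb hab)
  -- limit at 0+
  have htend0 : Filter.Tendsto (V1 r c) (nhdsWithin 0 (Set.Ioi 0)) (nhds (π / 2)) := by
    have hk0 : Tendsto kf (nhdsWithin 0 (Set.Ioi 0)) (nhds 0) := by
      have h1 : Tendsto (fun α : ℝ => α ^ (2 * r - 2)) (nhds 0) (nhds 0) := by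
        have := (Real.continuousAt_rpow_const 0 (2 * r - 2) (Or.inr hre.le)).tendsto
        rwa [Real.zero_rpow (ne_of_gt hre)] at this
      have h2 : Tendsto (fun α : ℝ => α ^ (2 * r - 2)) (nhdsWithin 0 (Set.Ioi 0)) (nhds 0) :=
        h1.mono_left nhdsWithin_le_nhds
      have h3 := h2.div_const (r * c)
      simpa using h3
    have hup : Tendsto (fun α => (1 / Real.sqrt (1 + kf α)) * (π / 2))
        (nhdsWithin 0 (Set.Ioi 0)) (nhds (π / 2)) := by
      have hφ : ContinuousAt (fun x : ℝ => (1 / Real.sqrt (1 + x)) * (π / 2)) 0 := by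
        apply ContinuousAt.mul _ continuousAt_const
        apply ContinuousAt.div continuousAt_const
        · exact (Real.continuous_sqrt.comp (continuous_const.add continuous_id)).continuousAt
        · simp
      have := hφ.tendsto.comp hk0
      simpa [Function.comp_def] using this
    have hlo : Tendsto (fun α => (1 / Real.sqrt (1 + r * kf α)) * (π / 2))
        (nhdsWithin 0 (Set.Ioi 0)) (nhds (π / 2)) := by
      have hφ : ContinuousAt (fun x : ℝ => (1 / Real.sqrt (1 + r * x)) * (π / 2)) 0 := by
        apply ContinuousAt.mul _ continuousAt_const
        apply ContinuousAt.div continuousAt_const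
        · exact (Real.continuous_sqrt.comp
            (continuous_const.add (continuous_const.mul continuous_id))).continuousAt
        · simp
      have := hφ.tendsto.comp hk0
      simpa [Function.comp_def] using this
    refine tendsto_of_tendsto_of_tendsto_of_le_of_le' hlo hup ?_ ?_
    · filter_upwards [self_mem_nhdsWithin] with α hα
      rw [hV α]; exact F_ge hr (hkf_pos α hα).le
    · filter_upwards [self_mem_nhdsWithin] with α hα
      rw [hV α]; exact F_le hr (hkf_pos α hα).le
  -- limit at ∞
  have htendtop : Filter.Tendsto (V1 r c) Filter.atTop (nhds 0) := by
    have hktop : Tendsto kf atTop atTop :=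
      (tendsto_rpow_atTop hre).atTop_div_const hrc
    have hsqrt_top : Tendsto Real.sqrt atTop atTop := by
      rw [tendsto_atTop_atTop]
      intro b
      exact ⟨b ^ 2, fun a ha => by
        calc b ≤ |b| := le_abs_self b
          _ = Real.sqrt (b ^ 2) := (Real.sqrt_sq_eq_abs b).symm
          _ ≤ Real.sqrt a := Real.sqrt_le_sqrt ha⟩
    have hup : Tendsto (fun α => (1 / Real.sqrt (1 + kf α)) * (π / 2)) atTop (nhds 0) := by
      have h1 : Tendsto (fun α => Real.sqrt (1 + kf α)) atTop atTop :=
        hsqrt_top.comp (tendsto_atTop_add_const_left _ 1 hktop)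
      have h2 := h1.inv_tendsto_atTop
      have := h2.mul_const (π / 2)
      simpa [one_div] using this
    refine tendsto_of_tendsto_of_tendsto_of_le_of_le' tendsto_const_nhds hup ?_ ?_
    · exact Filter.Eventually.of_forall (fun α => V1_nonneg r c α)
    · filter_upwards [eventually_gt_atTop (0:ℝ)] with α hα
      rw [hV α]; exact F_le hr (hkf_pos α hα).le
  refine ⟨hcont, hanti, htend0, htendtop, ?_⟩
  have hmaps : Set.MapsTo (V1 r c) (Set.Ioi 0) (Set.Ioo 0 (π / 2)) := by
    intro α hα
    constructor
    · rw [hV α]; exact F_pos hr (hkf_pos α hα).le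
    · rw [hV α]
      refine lt_of_le_of_lt (F_le hr (hkf_pos α hα).le) ?_
      have hs : 1 < Real.sqrt (1 + kf α) := by
        have h1 : Real.sqrt 1 < Real.sqrt (1 + kf α) :=
          Real.sqrt_lt_sqrt zero_le_one (by nlinarith [hkf_pos α hα])
        rwa [Real.sqrt_one] at h1
      exact mul_lt_of_lt_one_left (by positivity) ((div_lt_one (by linarith)).2 hs)
  refine ⟨hmaps, hanti.injOn, ?_⟩
  intro y hy
  obtain ⟨a, hya, ha⟩ :=
    ((htend0.eventually (eventually_gt_nhds hy.2)).and self_mem_nhdsWithin).exists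
  obtain ⟨b, hb1, hb2⟩ :=
    ((htendtop.eventually (eventually_lt_nhds hy.1)).and (eventually_gt_atTop a)).exists
  have hsub : Set.Icc a b ⊆ Set.Ioi 0 := fun x hx => lt_of_lt_of_le ha hx.1
  obtain ⟨x, hx, hxy⟩ := intermediate_value_Icc' hb2.le (hcont.mono hsub) ⟨hb1.le, hya.le⟩
  exact ⟨x, hsub hx, hxy⟩
end

section
/- Suppose $u$ is a nontrivial solution of the critical equation on $[0,1]$ with $u(0)=u(1)=0$, having exactly $m-1$ interior zeros, with $\lambda-q_0>0$ and $\lambda\neq q_0+m^2\pi^2$. If $\lambda-q_0>m^2\pi^2$ then $\varepsilon=+1$; if $0<\lambda-q_0<m^2\pi^2$ then $\varepsilon=-1$. This follows from the quarter-period identity $\frac{1}{2m}=\frac{1}{\sqrt{\lambda-q_0}}\int_0^1\frac{dt}{\sqrt{(1-t^2)-\frac{\varepsilon a^{2p^*-2}}{p^*(\lambda-q_0)}(1-t^{2p^*})}}$ together with the comparison of the integral with $\pi/2$. -/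
open Real Set


lemma nodal_core (P u : ℝ → ℝ) (hP : Continuous P)
    (hu1 : Differentiable ℝ u) (hu2 : Differentiable ℝ (deriv u))
    (hode : ∀ x ∈ Icc (0:ℝ) 1, deriv (deriv u) x = -(P x * u x))
    {a b : ℝ} (hab : a < b) (ha : a ∈ Icc (0:ℝ) 1) (hb : b ∈ Icc (0:ℝ) 1)
    (hua : u a = 0) (hub : u b = 0) (s : ℝ)
    (hsign : ∀ x ∈ Ioo a b, 0 < s * (((π/(b-a))^2 - P x) * u x)) : False := by
  set L : ℝ := b - a with hL
  have hL0 : 0 < L := by simp [hL]; linarith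
  set c : ℝ := π / L with hc
  set v : ℝ → ℝ := fun x => Real.sin (c * (x - a)) with hv
  set v' : ℝ → ℝ := fun x => Real.cos (c * (x - a)) * c with hv'
  have hinner : ∀ x : ℝ, HasDerivAt (fun y => c * (y - a)) c x := by
    intro x
    simpa using ((hasDerivAt_id x).sub_const a).const_mul c
  have hdv : ∀ x : ℝ, HasDerivAt v (v' x) x := by
    intro x
    exact (Real.hasDerivAt_sin (c * (x - a))).comp x (hinner x)
  have hdv' : ∀ x : ℝ, HasDerivAt v' (-(c^2) * v x) x := by
    intro x
    have := ((Real.hasDerivAt_cos (c * (x - a))).comp x (hinner x)).mul_const c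
    refine this.congr_deriv ?_
    simp [hv]; ring
  set w : ℝ → ℝ := fun x => deriv u x * v x - u x * v' x with hw
  set F : ℝ → ℝ := fun x => (c^2 - P x) * u x * v x with hF
  have hsub : uIcc a b ⊆ Icc (0:ℝ) 1 := by
    rw [uIcc_of_le hab.le]
    exact Icc_subset_Icc ha.1 hb.2
  have hdw : ∀ x ∈ uIcc a b, HasDerivAt w (F x) x := by
    intro x hx
    have h1 : HasDerivAt (deriv u) (deriv (deriv u) x) x := (hu2 x).hasDerivAt
    have h2 : HasDerivAt u (deriv u x) x := (hu1 x).hasDerivAt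
    have := ((h1.mul (hdv x)).sub (h2.mul (hdv' x)))
    refine this.congr_deriv ?_
    rw [hode x (hsub hx)]
    simp [hF]; ring
  have hFc : Continuous F := by
    exact ((continuous_const.sub hP).mul hu1.continuous).mul
      (Real.continuous_sin.comp ((continuous_const.mul (continuous_id.sub continuous_const)))) 
  have hFi : IntervalIntegrable F MeasureTheory.volume a b := hFc.intervalIntegrable a b
  have hint : ∫ x in a..b, F x = 0 := by
    rw [intervalIntegral.integral_eq_sub_of_hasDerivAt hdw hFi]
    simp [hw, hua, hub, hv, hc]
    have : c * (b - a) = π := by rw [hc, ← hL]; exact div_mul_cancel₀ π hL0.ne'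
    rw [hc] at this; simp [this]
  have hpos : 0 < ∫ x in a..b, s * F x := by
    apply intervalIntegral.intervalIntegral_pos_of_pos_on
    · exact ((continuous_const.mul hFc).intervalIntegrable a b)
    · intro x hx
      have hc0 : 0 < c := div_pos Real.pi_pos hL0
      have hvx : 0 < v x := by
        apply Real.sin_pos_of_pos_of_lt_pi
        · have : 0 < x - a := by linarith [hx.1]
          positivity
        · have h1 : c * (x - a) < c * L := by
            apply mul_lt_mul_of_pos_left _ hc0
            simp [hL]; linarith [hx.2]
          have h2 : c * L = π := by rw [hc]; exact div_mul_cancel₀ π hL0.ne'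
          linarith
      have := hsign x hx
      calc (0:ℝ) < (s * (((π/(b-a))^2 - P x) * u x)) * v x := mul_pos this hvx
        _ = s * F x := by simp [hF, hc, hL]; ring
    · exact hab
  rw [intervalIntegral.integral_const_mul, hint, mul_zero] at hpos
  exact lt_irrefl _ hpos


lemma sign_const (u : ℝ → ℝ) (hc : Continuous u) {a b : ℝ} (hab : a < b)
    (hne : ∀ x ∈ Ioo a b, u x ≠ 0) :
    ∀ x ∈ Ioo a b, 0 < u x * u ((a+b)/2) := by
  have hcm : (a+b)/2 ∈ Ioo a b := by constructor <;> [linarith; linarith]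
  intro x hx
  rcases lt_trichotomy (u x * u ((a+b)/2)) 0 with h|h|h
  · exfalso
    have hsub : uIcc x ((a+b)/2) ⊆ Ioo a b := by
      rw [uIcc_eq_union]
      apply union_subset
      · exact Icc_subset_Ioo hx.1 hcm.2
      · exact Icc_subset_Ioo hcm.1 hx.2
    have h0 : (0:ℝ) ∈ uIcc (u x) (u ((a+b)/2)) := by
      rcases mul_neg_iff.mp h with ⟨h1, h2⟩|⟨h1, h2⟩
      · exact mem_uIcc.2 (Or.inr ⟨h2.le, h1.le⟩)
      · exact mem_uIcc.2 (Or.inl ⟨h1.le, h2.le⟩)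
    obtain ⟨z, hz, hz0⟩ := intermediate_value_uIcc (hc.continuousOn) h0
    exact hne z (hsub hz) hz0
  · exfalso
    rcases mul_eq_zero.mp h with h|h
    · exact hne x hx h
    · exact hne _ hcm h
  · exact h

lemma nodal (P u : ℝ → ℝ) (hP : Continuous P)
    (hu1 : Differentiable ℝ u) (hu2 : Differentiable ℝ (deriv u))
    (hode : ∀ x ∈ Icc (0:ℝ) 1, deriv (deriv u) x = -(P x * u x))
    {a b : ℝ} (hab : a < b) (ha : a ∈ Icc (0:ℝ) 1) (hb : b ∈ Icc (0:ℝ) 1)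
    (hua : u a = 0) (hub : u b = 0) (hne : ∀ x ∈ Ioo a b, u x ≠ 0)
    (hcomp : (∀ x ∈ Ioo a b, P x < (π/(b-a))^2) ∨ (∀ x ∈ Ioo a b, (π/(b-a))^2 < P x)) :
    False := by
  have hs := sign_const u hu1.continuous hab hne
  rcases hcomp with h|h
  · exact nodal_core P u hP hu1 hu2 hode hab ha hb hua hub (u ((a+b)/2))
      (fun x hx => by
        have h1 := hs x hx
        have h2 := h x hx
        calc (0:ℝ) < ((π/(b-a))^2 - P x) * (u x * u ((a+b)/2)) :=
              mul_pos (by linarith) h1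
          _ = u ((a+b)/2) * (((π/(b-a))^2 - P x) * u x) := by ring)
  · exact nodal_core P u hP hu1 hu2 hode hab ha hb hua hub (-u ((a+b)/2))
      (fun x hx => by
        have h1 := hs x hx
        have h2 := h x hx
        calc (0:ℝ) < (P x - (π/(b-a))^2) * (u x * u ((a+b)/2)) :=
              mul_pos (by linarith) h1
          _ = -u ((a+b)/2) * (((π/(b-a))^2 - P x) * u x) := by ring)


lemma vanish (P u : ℝ → ℝ) (hP : Continuous P)
    (hu1 : Differentiable ℝ u) (hu2 : Differentiable ℝ (deriv u))
    (hode : ∀ x ∈ Icc (0:ℝ) 1, deriv (deriv u) x = -(P x * u x))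
    {x0 : ℝ} (hx0 : x0 ∈ Icc (0:ℝ) 1) (hu0 : u x0 = 0) (hu0' : deriv u x0 = 0) :
    ∀ x ∈ Icc (0:ℝ) 1, u x = 0 := by
  obtain ⟨K0, hK0⟩ := (isCompact_Icc (a := (0:ℝ)) (b := 1)).exists_bound_of_continuousOn
    hP.continuousOn
  set K : ℝ := K0 + 1 with hK
  have hK0nn : 0 ≤ K0 := le_trans (norm_nonneg _) (hK0 x0 hx0)
  have hKpos : 0 < K := by linarith
  set E : ℝ → ℝ := fun x => u x ^ 2 + deriv u x ^ 2 with hE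
  have hEnn : ∀ x, 0 ≤ E x := fun x => by positivity
  have hdE : ∀ x, HasDerivAt E
      (2 * u x * deriv u x + 2 * deriv u x * deriv (deriv u) x) x := by
    intro x
    have h1 : HasDerivAt (fun y => u y ^ 2) (2 * u x * deriv u x) x := by
      simpa [mul_comm] using ((hu1 x).hasDerivAt.fun_pow 2)
    have h2 : HasDerivAt (fun y => deriv u y ^ 2)
        (2 * deriv u x * deriv (deriv u) x) x := by
      simpa [mul_comm] using ((hu2 x).hasDerivAt.fun_pow 2)
    exact h1.add h2
  have hEbound : ∀ x ∈ Icc (0:ℝ) 1, |deriv E x| ≤ K * E x := by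
    intro x hx
    have hd := (hdE x).deriv
    rw [hd, hode x hx]
    have habs : |2 * u x * deriv u x + 2 * deriv u x * -(P x * u x)|
        = |1 - P x| * |2 * u x * deriv u x| := by
      rw [← abs_mul]; congr 1; ring
    rw [habs]
    have hPa : |P x| ≤ K0 := by
      have := hK0 x hx; rwa [Real.norm_eq_abs] at this
    have h1 : |1 - P x| ≤ K := by
      rw [abs_le] at hPa ⊢
      simp only [hK]; constructor <;> linarith [hPa.1, hPa.2]
    have h2 : |2 * u x * deriv u x| ≤ E x := by
      simp only [hE]
      rw [abs_le]
      constructor <;> nlinarith [sq_nonneg (u x + deriv u x), sq_nonneg (u x - deriv u x)]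
    exact mul_le_mul h1 h2 (abs_nonneg _) hKpos.le
  have hEdiff : Differentiable ℝ E := fun x => (hdE x).differentiableAt
  -- E = 0 on Icc 0 1
  have hEzero : ∀ x ∈ Icc (0:ℝ) 1, E x = 0 := by
    intro x hx
    rcases le_total x0 x with hle|hle
    · -- forward: g = E * exp(-K x) antitone on [x0, 1]
      set g : ℝ → ℝ := fun y => E y * Real.exp (-K * y) with hg
      have hdg : ∀ y, HasDerivAt g
          ((deriv E y - K * E y) * Real.exp (-K * y)) y := by
        intro y
        have he0 : HasDerivAt (fun z : ℝ => -K * z) (-K) y := by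
          simpa using (hasDerivAt_id y).const_mul (-K)
        have he : HasDerivAt (fun z => Real.exp (-K * z)) (Real.exp (-K * y) * -K) y :=
          (Real.hasDerivAt_exp (-K * y)).comp y he0
        have := ((hEdiff y).hasDerivAt.mul he)
        refine this.congr_deriv ?_
        rw [(hdE y).deriv]
        ring
      have hanti : AntitoneOn g (Icc x0 1) := by
        apply antitoneOn_of_deriv_nonpos (convex_Icc x0 1)
        · exact (Continuous.continuousOn (by
            exact (hEdiff.continuous.mul ((Real.continuous_exp).comp
              (continuous_const.mul continuous_id)))))
        · intro y hy
          exact ((hdg y).differentiableAt).differentiableWithinAt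
        · intro y hy
          rw [interior_Icc] at hy
          have hyIcc : y ∈ Icc (0:ℝ) 1 := ⟨le_trans hx0.1 hy.1.le, hy.2.le⟩
          rw [(hdg y).deriv]
          have := hEbound y hyIcc
          have h4 : deriv E y - K * E y ≤ 0 := by
            have := abs_le.mp this
            linarith [this.2]
          exact mul_nonpos_of_nonpos_of_nonneg h4 (Real.exp_nonneg _)
      have hgx : g x ≤ g x0 := hanti ⟨le_refl x0, hx0.2⟩ ⟨hle, hx.2⟩ hle
      have hgx0 : g x0 = 0 := by simp [hg, hE, hu0, hu0']
      have : E x * Real.exp (-K * x) ≤ 0 := by rw [← hgx0]; exact hgx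
      have hexp : 0 < Real.exp (-K * x) := Real.exp_pos _
      nlinarith [hEnn x]
    · -- backward: h = E * exp(K x) monotone on [0, x0]
      set g : ℝ → ℝ := fun y => E y * Real.exp (K * y) with hg
      have hdg : ∀ y, HasDerivAt g
          ((deriv E y + K * E y) * Real.exp (K * y)) y := by
        intro y
        have he0 : HasDerivAt (fun z : ℝ => K * z) K y := by
          simpa using (hasDerivAt_id y).const_mul K
        have he : HasDerivAt (fun z => Real.exp (K * z)) (Real.exp (K * y) * K) y :=
          (Real.hasDerivAt_exp (K * y)).comp y he0
        have := ((hEdiff y).hasDerivAt.mul he)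
        refine this.congr_deriv ?_
        rw [(hdE y).deriv]
        ring
      have hmono : MonotoneOn g (Icc (0:ℝ) x0) := by
        apply monotoneOn_of_deriv_nonneg (convex_Icc 0 x0)
        · exact (Continuous.continuousOn (by
            exact (hEdiff.continuous.mul ((Real.continuous_exp).comp
              (continuous_const.mul continuous_id)))))
        · intro y hy
          exact ((hdg y).differentiableAt).differentiableWithinAt
        · intro y hy
          rw [interior_Icc] at hy
          have hyIcc : y ∈ Icc (0:ℝ) 1 := ⟨hy.1.le, hy.2.le.trans hx0.2⟩
          rw [(hdg y).deriv]
          have := hEbound y hyIcc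
          have h4 : 0 ≤ deriv E y + K * E y := by
            have := abs_le.mp this
            linarith [this.1]
          exact mul_nonneg h4 (Real.exp_nonneg _)
      have hgx : g x ≤ g x0 := hmono ⟨hx.1, hle⟩ ⟨hx0.1, le_refl x0⟩ hle
      have hgx0 : g x0 = 0 := by simp [hg, hE, hu0, hu0']
      have : E x * Real.exp (K * x) ≤ 0 := by rw [← hgx0]; exact hgx
      have hexp : 0 < Real.exp (K * x) := Real.exp_pos _
      nlinarith [hEnn x]
  intro x hx
  have h7 := hEzero x hx
  simp only [hE] at h7
  have h6 : u x ^ 2 = 0 := by nlinarith [sq_nonneg (u x), sq_nonneg (deriv u x)]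
  exact pow_eq_zero_iff (by norm_num) |>.mp h6


lemma main_aux (P u : ℝ → ℝ) (hP : Continuous P)
    (hu1 : Differentiable ℝ u) (hu2 : Differentiable ℝ (deriv u))
    (hode : ∀ x ∈ Icc (0:ℝ) 1, deriv (deriv u) x = -(P x * u x))
    (hnt : ∃ x ∈ Icc (0:ℝ) 1, u x ≠ 0) (h0 : u 0 = 0) (h1 : u 1 = 0)
    (m : ℕ) (hm : 1 ≤ m)
    (hzeros : {x ∈ Ioo (0:ℝ) 1 | u x = 0}.ncard = m - 1)
    (hcomp : (∀ x ∈ Icc (0:ℝ) 1, P x < ((m:ℝ)*π)^2) ∨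
             (∀ x ∈ Icc (0:ℝ) 1, ((m:ℝ)*π)^2 < P x)) : False := by
  set S : Set ℝ := {x ∈ Ioo (0:ℝ) 1 | u x = 0} with hS
  have hSsub : S ⊆ Icc (0:ℝ) 1 := fun x hx => ⟨hx.1.1.le, hx.1.2.le⟩
  -- S is finite
  have hSfin : S.Finite := by
    by_contra hinf
    have hinf' : S.Infinite := hinf
    obtain ⟨x0, hx0K, hacc⟩ := hinf'.exists_accPt_of_subset_isCompact isCompact_Icc hSsub
    have hnb : ((nhdsWithin x0 {x0}ᶜ) ⊓ Filter.principal S).NeBot := hacc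
    have hux0 : u x0 = 0 := by
      have hcl : x0 ∈ closure S := by
        have : ClusterPt x0 (Filter.principal S) := by
          have hle : (nhdsWithin x0 {x0}ᶜ) ⊓ Filter.principal S ≤
              nhds x0 ⊓ Filter.principal S :=
            le_inf (inf_le_left.trans nhdsWithin_le_nhds) inf_le_right
          exact Filter.neBot_of_le (hf := hacc) hle
        exact mem_closure_iff_clusterPt.mpr this
      have hclosed : IsClosed {x : ℝ | u x = 0} := isClosed_eq hu1.continuous continuous_const
      have : closure S ⊆ {x : ℝ | u x = 0} :=
        hclosed.closure_subset_iff.mpr (fun x hx => hx.2)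
      exact this hcl
    have hd : deriv u x0 = 0 := by
      have hd1 := (hu1 x0).hasDerivAt
      rw [hasDerivAt_iff_tendsto_slope] at hd1
      have h2 : Filter.Tendsto (slope u x0) ((nhdsWithin x0 {x0}ᶜ) ⊓ Filter.principal S)
          (nhds (deriv u x0)) := hd1.mono_left inf_le_left
      have h3 : Filter.Tendsto (slope u x0) ((nhdsWithin x0 {x0}ᶜ) ⊓ Filter.principal S)
          (nhds 0) := by
        apply Filter.Tendsto.congr' _ tendsto_const_nhds
        have hmem : S ∈ (nhdsWithin x0 {x0}ᶜ) ⊓ Filter.principal S :=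
          Filter.mem_inf_of_right (Filter.mem_principal_self S)
        filter_upwards [hmem] with z hz
        simp [slope, hz.2, hux0]
      exact tendsto_nhds_unique h2 h3
    have := vanish P u hP hu1 hu2 hode hx0K hux0 hd
    obtain ⟨y, hy, hy0⟩ := hnt
    exact hy0 (this y hy)
  -- build the sorted enumeration
  have hScard : hSfin.toFinset.card = m - 1 := by
    rw [← Set.ncard_eq_toFinset_card S hSfin]
    exact hzeros
  set T : Finset ℝ := insert 0 (insert 1 hSfin.toFinset) with hT
  have h0S : (0:ℝ) ∉ hSfin.toFinset := by
    simp [Set.Finite.mem_toFinset, hS]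
  have h1S : (1:ℝ) ∉ hSfin.toFinset := by
    simp [Set.Finite.mem_toFinset, hS]
  have hTcard : T.card = m + 1 := by
    rw [hT, Finset.card_insert_of_notMem (by simp [h0S]),
      Finset.card_insert_of_notMem h1S, hScard]
    omega
  set e := T.orderIsoOfFin hTcard with he
  set x : ℕ → ℝ := fun i => (e ⟨min i m, by omega⟩ : ℝ) with hx
  have hxe : ∀ i (hi : i ≤ m), x i = (e ⟨i, by omega⟩ : ℝ) := by
    intro i hi
    simp only [hx, min_eq_left hi]
  have hmemT : ∀ i, x i ∈ T := fun i => (e _).2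
  have hTic : ∀ y ∈ T, y ∈ Icc (0:ℝ) 1 := by
    intro y hy
    rw [hT] at hy
    simp only [Finset.mem_insert, Set.Finite.mem_toFinset] at hy
    rcases hy with rfl|rfl|hy
    · exact ⟨le_refl 0, by norm_num⟩
    · exact ⟨by norm_num, le_refl 1⟩
    · exact hSsub hy
  have hTzero : ∀ y ∈ T, u y = 0 := by
    intro y hy
    rw [hT] at hy
    simp only [Finset.mem_insert, Set.Finite.mem_toFinset] at hy
    rcases hy with rfl|rfl|hy
    · exact h0
    · exact h1
    · exact hy.2
  have hstrict : ∀ i, i < m → x i < x (i+1) := by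
    intro i hi
    rw [hxe i (by omega), hxe (i+1) (by omega)]
    exact_mod_cast e.strictMono (by simp [Fin.mk_lt_mk])
  have hx0 : x 0 = 0 := by
    have h0T : (0:ℝ) ∈ T := by simp [hT]
    have hle : x 0 ≤ 0 := by
      rw [hxe 0 (by omega)]
      have := e.monotone (Fin.zero_le (e.symm ⟨0, h0T⟩))
      rw [OrderIso.apply_symm_apply] at this; exact this
    exact le_antisymm hle (hTic _ (hmemT 0)).1
  have hxm : x m = 1 := by
    have h1T : (1:ℝ) ∈ T := by simp [hT]
    have hle : 1 ≤ x m := by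
      rw [hxe m (by omega)]
      have := e.monotone (Fin.le_last (e.symm ⟨1, h1T⟩))
      rw [OrderIso.apply_symm_apply] at this; exact this
    exact le_antisymm (hTic _ (hmemT m)).2 hle
  have hxIcc : ∀ i, x i ∈ Icc (0:ℝ) 1 := fun i => hTic _ (hmemT i)
  -- gaps are nodal
  have hgap : ∀ i, i < m → ∀ z ∈ Ioo (x i) (x (i+1)), u z ≠ 0 := by
    intro i hi z hz hz0
    have hz01 : z ∈ Ioo (0:ℝ) 1 := by
      constructor
      · calc (0:ℝ) = x 0 := hx0.symm
          _ ≤ x i := by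
              rcases Nat.eq_zero_or_pos i with rfl|hip
              · exact le_refl _
              · rw [hxe 0 (by omega), hxe i (by omega)]
                exact_mod_cast (e.monotone (by simp only [Fin.mk_le_mk]; omega))
          _ < z := hz.1
      · calc z < x (i+1) := hz.2
          _ ≤ x m := by
              rw [hxe (i+1) (by omega), hxe m (by omega)]
              exact_mod_cast (e.monotone (by simp only [Fin.mk_le_mk]; omega))
          _ = 1 := hxm
    have hzT : z ∈ T := by
      rw [hT]
      simp only [Finset.mem_insert, Set.Finite.mem_toFinset]
      exact Or.inr (Or.inr ⟨hz01, hz0⟩)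
    set k := e.symm ⟨z, hzT⟩ with hk
    have hzk : (e k : ℝ) = z := by simp [hk]
    have hik : (⟨i, by omega⟩ : Fin (m+1)) < k := by
      rw [← e.lt_iff_lt, ← Subtype.coe_lt_coe, ← hxe i (by omega), hzk]
      exact hz.1
    have hki : k < (⟨i+1, by omega⟩ : Fin (m+1)) := by
      rw [← e.lt_iff_lt, ← Subtype.coe_lt_coe, ← hxe (i+1) (by omega), hzk]
      exact hz.2
    have : (i:ℕ) < k.val ∧ k.val < i + 1 := by
      constructor
      · exact_mod_cast hik
      · exact_mod_cast hki
    omega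
  -- telescoping
  have htel : ∑ i ∈ Finset.range m, (x (i+1) - x i) = 1 := by
    rw [Finset.sum_range_sub x m, hxm, hx0]
    ring
  have hmpos : (0:ℝ) < m := by exact_mod_cast hm
  rcases hcomp with hlt|hgt
  · -- each gap > 1/m
    have hbig : ∀ i ∈ Finset.range m, 1/(m:ℝ) < x (i+1) - x i := by
      intro i hi
      rw [Finset.mem_range] at hi
      by_contra hcon
      push_neg at hcon
      have hab := hstrict i hi
      apply nodal P u hP hu1 hu2 hode hab (hxIcc i) (hxIcc (i+1))
        (hTzero _ (hmemT i)) (hTzero _ (hmemT (i+1))) (hgap i hi)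
      left
      intro z hz
      have hzIcc : z ∈ Icc (0:ℝ) 1 :=
        ⟨(hxIcc i).1.trans hz.1.le, hz.2.le.trans (hxIcc (i+1)).2⟩
      have h5 : (m:ℝ)*π ≤ π/(x (i+1) - x i) := by
        rw [le_div_iff₀ (by linarith)]
        calc (m:ℝ)*π*(x (i+1) - x i) ≤ (m:ℝ)*π*(1/m) := by
              apply mul_le_mul_of_nonneg_left hcon (by positivity)
          _ = π := by field_simp
      calc P z < ((m:ℝ)*π)^2 := hlt z hzIcc
        _ ≤ (π/(x (i+1) - x i))^2 := by
            apply pow_le_pow_left₀ (by positivity) h5 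
    have : (1:ℝ) < 1 := by
      calc (1:ℝ) = ∑ i ∈ Finset.range m, 1/(m:ℝ) := by
            rw [Finset.sum_const, Finset.card_range, nsmul_eq_mul]
            field_simp
        _ < ∑ i ∈ Finset.range m, (x (i+1) - x i) :=
            Finset.sum_lt_sum_of_nonempty (by simp; omega) hbig
        _ = 1 := htel
    linarith
  · -- each gap < 1/m
    have hsmall : ∀ i ∈ Finset.range m, x (i+1) - x i < 1/(m:ℝ) := by
      intro i hi
      rw [Finset.mem_range] at hi
      by_contra hcon
      push_neg at hcon
      have hab := hstrict i hi
      apply nodal P u hP hu1 hu2 hode hab (hxIcc i) (hxIcc (i+1))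
        (hTzero _ (hmemT i)) (hTzero _ (hmemT (i+1))) (hgap i hi)
      right
      intro z hz
      have hzIcc : z ∈ Icc (0:ℝ) 1 :=
        ⟨(hxIcc i).1.trans hz.1.le, hz.2.le.trans (hxIcc (i+1)).2⟩
      have h5 : π/(x (i+1) - x i) ≤ (m:ℝ)*π := by
        rw [div_le_iff₀ (by linarith)]
        calc π = (m:ℝ)*π*(1/m) := by field_simp
          _ ≤ (m:ℝ)*π*(x (i+1) - x i) := by
              apply mul_le_mul_of_nonneg_left hcon (by positivity)
      calc (π/(x (i+1) - x i))^2 ≤ ((m:ℝ)*π)^2 := by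
            apply pow_le_pow_left₀ (le_of_lt (div_pos Real.pi_pos (by linarith))) h5
        _ < P z := hgt z hzIcc
    have : (1:ℝ) < 1 := by
      calc (1:ℝ) = ∑ i ∈ Finset.range m, (x (i+1) - x i) := htel.symm
        _ < ∑ i ∈ Finset.range m, 1/(m:ℝ) :=
            Finset.sum_lt_sum_of_nonempty (by simp; omega) hsmall
        _ = 1 := by
            rw [Finset.sum_const, Finset.card_range, nsmul_eq_mul]
            field_simp
    linarith


theorem stmt_10 (q0 lam ε r : ℝ) (hr : 1 < r) (hε : ε = 1 ∨ ε = -1)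
    (m : ℕ) (hm : 1 ≤ m)
    (u : ℝ → ℝ) (hu : ContDiff ℝ 2 u)
    (hnt : ∃ x ∈ Set.Icc (0:ℝ) 1, u x ≠ 0)
    (h0 : u 0 = 0) (h1 : u 1 = 0)
    (hode : ∀ x ∈ Set.Icc (0:ℝ) 1,
      -(deriv (deriv u) x) + q0 * u x + ε * (|u x| ^ (2 * r - 2) * u x) = lam * u x)
    (hzeros : {x ∈ Set.Ioo (0:ℝ) 1 | u x = 0}.ncard = m - 1)
    (hpos : 0 < lam - q0) (hne : lam ≠ q0 + (m:ℝ) ^ 2 * π ^ 2) :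
    ((m:ℝ) ^ 2 * π ^ 2 < lam - q0 → ε = 1) ∧
    (lam - q0 < (m:ℝ) ^ 2 * π ^ 2 → ε = -1) := by
  have hu' : ContDiff ℝ ((1:ℕ) + 1) u := by exact_mod_cast hu
  have hu1 : Differentiable ℝ u := hu'.differentiable (by norm_num)
  have hu2 : Differentiable ℝ (deriv u) :=
    ((contDiff_succ_iff_deriv.mp hu').2.2).differentiable (by norm_num)
  set P : ℝ → ℝ := fun x => lam - q0 - ε * |u x| ^ (2 * r - 2) with hPdef
  have hexp : (0:ℝ) ≤ 2 * r - 2 := by linarith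
  have hA : ∀ x : ℝ, 0 ≤ |u x| ^ (2 * r - 2) := fun x => rpow_nonneg (abs_nonneg _) _
  have hPc : Continuous P := by
    apply continuous_const.sub
    apply continuous_const.mul
    exact (hu1.continuous.abs).rpow_const (fun x => Or.inr hexp)
  have hodeP : ∀ x ∈ Icc (0:ℝ) 1, deriv (deriv u) x = -(P x * u x) := by
    intro x hx
    have h := hode x hx
    simp only [hPdef]
    linear_combination -h
  have hmp : ((m:ℝ)*π)^2 = (m:ℝ)^2 * π^2 := by ring
  constructor
  · intro hlt
    rcases hε with rfl|rfl
    · rfl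
    · exfalso
      apply main_aux P u hPc hu1 hu2 hodeP hnt h0 h1 m hm hzeros
      right
      intro x hx
      have := hA x
      rw [hmp]
      simp only [hPdef]
      nlinarith
  · intro hlt
    rcases hε with rfl|rfl
    · exfalso
      apply main_aux P u hPc hu1 hu2 hodeP hnt h0 h1 m hm hzeros
      left
      intro x hx
      have := hA x
      rw [hmp]
      simp only [hPdef]
      nlinarith
    · rfl
end
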